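/- Let H be a Hilbert space, F : H →L[ℂ] H a linear contraction, and u ∈ H. Suppose the Cesàro averages (1/t) ∑_{i=1}^{t} ⟨Fⁱu, v⟩ converge for every v ∈ H, defining a bounded linear functional φ. Then the vector w representing φ (via Riesz representation) satisfies Fw = w. -/

import Mathlib

theorem riesz_vector_is_fixed_point
    {H : Type*} [NormedAddCommGroup H] [InnerProductSpace ℂ H] [CompleteSpace H]
    (F : H →L[ℂ] H) (hF : ‖F‖ ≤ 1) (u : H)
    (φ : H → ℂ)
    (hφ : ∀ v : H, Filter.Tendsto
      (fun t : ℕ => (1 / (t : ℂ)) * ∑ i ∈ Finset.Icc 1 t, (inner ℂ ((F ^ i) u) v : ℂ))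
      Filter.atTop (nhds (φ v)))
    (w : H) (hw : ∀ v : H, (inner ℂ w v : ℂ) = φ v) :
    F w = w := by
  have hbound : ∀ i : ℕ, ‖(F ^ i) u‖ ≤ ‖u‖ := by
    intro i
    induction i with
    | zero => simp
    | succ n ih =>
      rw [pow_succ']
      calc ‖(F * F ^ n) u‖ = ‖F ((F ^ n) u)‖ := rfl
        _ ≤ ‖F‖ * ‖(F ^ n) u‖ := F.le_opNorm _
        _ ≤ 1 * ‖u‖ := mul_le_mul hF ih (norm_nonneg _) zero_le_one
        _ = ‖u‖ := one_mul _
  apply ext_inner_right ℂ (x := F w) (y := w)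
  intro v
  set g : ℕ → ℂ := fun i => (inner ℂ ((F ^ i) u) v : ℂ) with hg
  have hgb : ∀ i : ℕ, ‖g i‖ ≤ ‖u‖ * ‖v‖ := by
    intro i
    calc ‖g i‖ ≤ ‖(F ^ i) u‖ * ‖v‖ := norm_inner_le_norm _ _
      _ ≤ ‖u‖ * ‖v‖ := mul_le_mul_of_nonneg_right (hbound i) (norm_nonneg v)
  have hshift : ∀ t : ℕ, ∑ i ∈ Finset.Icc 1 t, g (i + 1)
      = (∑ i ∈ Finset.Icc 1 t, g i) - g 1 + g (t + 1) := by
    intro t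
    induction t with
    | zero => simp
    | succ n ih =>
      rw [Finset.sum_Icc_succ_top (by omega : 1 ≤ n + 1),
          Finset.sum_Icc_succ_top (by omega : 1 ≤ n + 1), ih]
      ring
  have hA := hφ ((ContinuousLinearMap.adjoint F) v)
  have hrw : ∀ i : ℕ,
      (inner ℂ ((F ^ i) u) ((ContinuousLinearMap.adjoint F) v) : ℂ) = g (i + 1) := by
    intro i
    rw [ContinuousLinearMap.adjoint_inner_right]
    simp only [hg, pow_succ']
    rfl
  simp only [hrw] at hA
  have hzero : Filter.Tendsto (fun t : ℕ => (1 / (t : ℂ)) * (g (t + 1) - g 1))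
      Filter.atTop (nhds 0) := by
    apply squeeze_zero_norm (a := fun t : ℕ => (1 / (t : ℝ)) * (2 * (‖u‖ * ‖v‖)))
    · intro t
      rw [norm_mul]
      have h1 : ‖(1 / (t : ℂ))‖ = 1 / (t : ℝ) := by
        simp [norm_div]
      rw [h1]
      apply mul_le_mul_of_nonneg_left _ (by positivity)
      calc ‖g (t + 1) - g 1‖ ≤ ‖g (t + 1)‖ + ‖g 1‖ := norm_sub_le _ _
        _ ≤ ‖u‖ * ‖v‖ + ‖u‖ * ‖v‖ := add_le_add (hgb _) (hgb _)
        _ = 2 * (‖u‖ * ‖v‖) := by ring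
    · have := tendsto_one_div_atTop_nhds_zero_nat.mul_const (2 * (‖u‖ * ‖v‖))
      simpa using this
  have hB : Filter.Tendsto (fun t : ℕ => (1 / (t : ℂ)) * ∑ i ∈ Finset.Icc 1 t, g (i + 1))
      Filter.atTop (nhds (φ v)) := by
    have h := (hφ v).add hzero
    rw [add_zero] at h
    apply h.congr
    intro t
    rw [hshift]
    ring
  have hEq : φ ((ContinuousLinearMap.adjoint F) v) = φ v := tendsto_nhds_unique hA hB
  calc (inner ℂ (F w) v : ℂ) = inner ℂ w ((ContinuousLinearMap.adjoint F) v) :=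
        (ContinuousLinearMap.adjoint_inner_right F w v).symm
    _ = φ ((ContinuousLinearMap.adjoint F) v) := hw _
    _ = φ v := hEq
    _ = inner ℂ w v := (hw v).symm
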